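/- Fix m ∈ ℝ and let C₃(b₁,b₂,b₃) = (1-b₁²)b₂ - b₁²m² - b₃² on ℝ³. Consider the reduced phase space P_m = {b ∈ ℝ³ : C₃(b) = 0, b₂ ≥ 0, b₁² ≤ 1}. Then a point b ∈ P_m satisfies ∇C₃(b) = 0 if and only if m = 0 and b = (1,0,0) or b = (-1,0,0). Consequently, for m ≠ 0 the variety {C₃ = 0} contains no singular points in P_m (P_m is a smooth surface), while for m = 0 the reduced phase space P₀ has exactly two singular (conical) points, located at (±1, 0, 0). -/

import Mathlib

noncomputable section

/-- `ℝ³` (`b`-space) as a Euclidean space. -/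
abbrev E3 := EuclideanSpace ℝ (Fin 3)

/-- `C₃(b) = (1-b₁²)b₂ - b₁²m² - b₃²`. -/
def C3fun (m : ℝ) : E3 → ℝ := fun b =>
  (1 - (b 0) ^ 2) * b 1 - (b 0) ^ 2 * m ^ 2 - (b 2) ^ 2

/-- A point of the reduced phase space `P_m = {C₃ = 0, b₂ ≥ 0, b₁² ≤ 1}` has
`∇C₃(b) = 0` iff `m = 0` and `b = (±1, 0, 0)`: for `m ≠ 0` the variety `{C₃ = 0}`
has no singular points in `P_m`, while `P₀` has exactly the two conical singular
points `(±1,0,0)`. -/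
theorem singular_points_of_Pm (m : ℝ) (b : E3)
    (hC : C3fun m b = 0) (hb2 : 0 ≤ b 1) (hb1 : (b 0) ^ 2 ≤ 1) :
    gradient (C3fun m) b = 0 ↔
      (m = 0 ∧ ((b 0 = 1 ∧ b 1 = 0 ∧ b 2 = 0) ∨ (b 0 = -1 ∧ b 1 = 0 ∧ b 2 = 0))) := by
  have h0 : HasFDerivAt (fun b : E3 => (b 0 : ℝ)) (EuclideanSpace.proj (𝕜 := ℝ) (0:Fin 3)) b :=
    (EuclideanSpace.proj (𝕜 := ℝ) (0:Fin 3)).hasFDerivAt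
  have h1 : HasFDerivAt (fun b : E3 => (b 1 : ℝ)) (EuclideanSpace.proj (𝕜 := ℝ) (1:Fin 3)) b :=
    (EuclideanSpace.proj (𝕜 := ℝ) (1:Fin 3)).hasFDerivAt
  have h2 : HasFDerivAt (fun b : E3 => (b 2 : ℝ)) (EuclideanSpace.proj (𝕜 := ℝ) (2:Fin 3)) b :=
    (EuclideanSpace.proj (𝕜 := ℝ) (2:Fin 3)).hasFDerivAt
  have hF := (((h0.mul h0).const_sub 1).mul h1).sub
      (((h0.mul h0).mul_const (m^2)).add (h2.mul h2))
  have h : HasFDerivAt (C3fun m) _ b :=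
    hF.congr_of_eventuallyEq (Filter.Eventually.of_forall fun x => by simp [C3fun]; ring)
  have hL := h.fderiv
  have hgrad : gradient (C3fun m) b = 0 ↔ fderiv ℝ (C3fun m) b = 0 := by
    unfold gradient
    rw [LinearIsometryEquiv.map_eq_zero_iff]
  have hC' : (1 - (b 0)^2) * b 1 - (b 0)^2 * m^2 - (b 2)^2 = 0 := hC
  rw [hgrad, hL]
  constructor
  · intro hz
    have e0 := ContinuousLinearMap.ext_iff.mp hz (EuclideanSpace.single (0:Fin 3) 1)
    have e1 := ContinuousLinearMap.ext_iff.mp hz (EuclideanSpace.single (1:Fin 3) 1)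
    have e2 := ContinuousLinearMap.ext_iff.mp hz (EuclideanSpace.single (2:Fin 3) 1)
    simp only [ContinuousLinearMap.sub_apply, ContinuousLinearMap.add_apply,
      ContinuousLinearMap.smul_apply, ContinuousLinearMap.zero_apply, PiLp.proj_apply,
      EuclideanSpace.single_apply, smul_eq_mul] at e0 e1 e2
    norm_num [Fin.ext_iff] at e0 e1 e2
    clear hz hL h hF hgrad
    have hb0sq : (b 0)^2 = 1 := by nlinarith [e1]
    have hm : m = 0 := by nlinarith [sq_nonneg (b 2), sq_nonneg m]
    have hb2z : b 2 = 0 := by nlinarith [sq_nonneg (b 2), sq_nonneg m]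
    have h' : b 0 * (b 1 * (-b 0 + -b 0) - m ^ 2 * (b 0 + b 0)) = 0 := by rw [e0]; ring
    have hb1z : b 1 = 0 := by nlinarith [h', hb0sq, hm, sq_nonneg m]
    have : b 0 = 1 ∨ b 0 = -1 := by
      have hfac : (b 0 - 1) * (b 0 + 1) = 0 := by nlinarith [hb0sq]
      rcases mul_eq_zero.mp hfac with h'' | h''
      · exact Or.inl (by linarith)
      · exact Or.inr (by linarith)
    rcases this with h' | h'
    · exact ⟨hm, Or.inl ⟨h', hb1z, hb2z⟩⟩
    · exact ⟨hm, Or.inr ⟨h', hb1z, hb2z⟩⟩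
  · rintro ⟨hm, (⟨ha, hb, hc⟩ | ⟨ha, hb, hc⟩)⟩ <;>
      · refine ContinuousLinearMap.ext fun v => ?_
        simp only [ContinuousLinearMap.sub_apply, ContinuousLinearMap.add_apply,
          ContinuousLinearMap.smul_apply, ContinuousLinearMap.zero_apply,
          ContinuousLinearMap.neg_apply, PiLp.proj_apply, smul_eq_mul, Pi.mul_apply]
        rw [ha, hb, hc, hm]
        ring
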